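/- For the pca structure on inhabited subsets of 𝔾 × Ar, the combinator s defined as the union of the set S of all suitably-typed substitution functions together with the padding set C = {(λx y.0, p → q → o) | F,G ∈ 𝐆, p,q ∈ Ar} satisfies: for all inhabited a, b, the application s·a·b is defined (it contains (0, o)). -/
import Mathlib


/-- The von Neumann numeral of `n`. -/
def natEmbed : ℕ → ZFSet
  | 0 => ∅
  | n + 1 => insert (natEmbed n) (natEmbed n)

/-- Finite types: the ground type `o` and arrow types `(σ)τ`. -/
inductive FType : Type
  | o : FType
  | arrow : FType → FType → FType

/-- The set-theoretic extension of a finite type: `F_o = ω` and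
`F_{(σ)τ}` is the set of all total (set) functions from `F_σ` to `F_τ`. -/
def Fext : FType → ZFSet
  | .o => ZFSet.omega
  | .arrow σ τ => ZFSet.funs (Fext σ) (Fext τ)

/-- The dependent product `∏_{n∈ℕ} Fₙ`: the set of functions `f` with domain `ω`
such that `f(n) ∈ Fₙ` for all `n`. -/
noncomputable def depProd (F : ℕ → ZFSet) : ZFSet :=
  ZFSet.sep
    (fun f => ∀ (n : ℕ) (y : ZFSet), ZFSet.pair (natEmbed n) y ∈ f → y ∈ F n)
    (ZFSet.funs ZFSet.omega (ZFSet.sUnion (ZFSet.range F)))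

/-- `𝐆`: the smallest collection of sets containing `ω`, closed under function
spaces and under countable dependent products. -/
inductive InG : ZFSet → Prop
  | omega : InG ZFSet.omega
  | funs {F G : ZFSet} : InG F → InG G → InG (ZFSet.funs F G)
  | prod (F : ℕ → ZFSet) : (∀ n, InG (F n)) → InG (depProd F)

/-- Arities: `o`; `p₀⋯pₙ → q` (at least one argument); countable products
`∏_{n∈ℕ} pₙ`. -/
inductive Arity : Type
  | o : Arity
  | arr : Arity → List Arity → Arity → Arity   -- `arr p ps q` is `p ps… → q`
  | prod : (ℕ → Arity) → Arity

/-- Iterated set-theoretic function application `x y₀ ⋯ yₖ = z` (as a relation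
via Kuratowski pairs). -/
def zAppList : ZFSet → List ZFSet → ZFSet → Prop
  | x, [], z => x = z
  | x, y :: ys, z => ∃ w : ZFSet, ZFSet.pair y w ∈ x ∧ zAppList w ys z

/-- Application of an arity-tagged element of `𝔾 × Ar` to a tuple:
`(x, p₀⋯pₙ→q)((y₀,p₀),…,(yₙ,pₙ)) ≃ (x y₀⋯yₙ, q)`, and
`(x, ∏ₘ pₘ)((m,o)) ≃ (x(m), pₘ)`. -/
def appTuple : ZFSet × Arity → List (ZFSet × Arity) → ZFSet × Arity → Prop
  | (x, .arr p ps q), ys, (z, q') =>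
      q' = q ∧ ys.map Prod.snd = p :: ps ∧ zAppList x (ys.map Prod.fst) z
  | (x, .prod pm), ys, (z, q) =>
      ∃ m : ℕ, ys = [(natEmbed m, .o)] ∧ q = pm m ∧ ZFSet.pair (natEmbed m) z ∈ x
  | (_, .o), _, _ => False

/-- The collecting application on subsets of `𝔾 × Ar`: `a·b` collects all
results of applying elements of `a` to tuples of elements of `b`; it is
defined iff the resulting set is inhabited. -/
def coll (a b : Set (ZFSet × Arity)) : Set (ZFSet × Arity) :=
  { z | ∃ x ∈ a, ∃ ys : List (ZFSet × Arity), (∀ y ∈ ys, y ∈ b) ∧ appTuple x ys z }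

/-- The carrier `𝔾 × Ar` (first components in `⋃𝐆`). -/
def Gr : Set (ZFSet × Arity) := { w | ∃ G : ZFSet, InG G ∧ w.1 ∈ G }

/-- The inner part `{(y, x) | y ∈ G}` of the curried constant function. -/
noncomputable def kInner (G x : ZFSet) : ZFSet :=
  ZFSet.sep (fun q => ∃ y ∈ G, q = ZFSet.pair y x)
    (ZFSet.powerset (ZFSet.powerset (G ∪ {x})))

/-- The curried first projection `k_{FG} : F → G → F`, `k_{FG} x y = x`. -/
noncomputable def kFun (F G : ZFSet) : ZFSet :=
  ZFSet.sep (fun w => ∃ x ∈ F, w = ZFSet.pair x (kInner G x))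
    (ZFSet.powerset (ZFSet.powerset
      (F ∪ ZFSet.powerset (ZFSet.powerset (ZFSet.powerset (F ∪ G))))))

/-- The inner part `{(y, 0) | y ∈ G}` of the constant-zero function. -/
noncomputable def czInner (G : ZFSet) : ZFSet :=
  ZFSet.sep (fun w => ∃ y ∈ G, w = ZFSet.pair y (natEmbed 0))
    (ZFSet.powerset (ZFSet.powerset (G ∪ {natEmbed 0})))

/-- The constant function `λx^F y^G.0`. -/
noncomputable def czFun (F G : ZFSet) : ZFSet :=
  ZFSet.sep (fun w => ∃ x ∈ F, w = ZFSet.pair x (czInner G))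
    (ZFSet.powerset (ZFSet.powerset (F ∪ {czInner G})))

/-- The padding set `C = {(λx^F y^G.0, p → q → o) | F, G ∈ 𝐆, p, q ∈ Ar}`. -/
noncomputable def Cset : Set (ZFSet × Arity) :=
  { w | ∃ F G : ZFSet, InG F ∧ InG G ∧ ∃ p q : Arity,
      w = (czFun F G, .arr p [] (.arr q [] .o)) }

/-- For the `s` combinator `S ∪ C` (for any set `S` of suitably-typed
substitution functions together with the padding set `C`), the application
`s·a·b` is defined for all inhabited `a, b ⊆ 𝔾 × Ar`: it contains `(0, o)`. -/

lemma pair_mem_pp {x y A : ZFSet} (hx : x ∈ A) (hy : y ∈ A) :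
    ZFSet.pair x y ∈ ZFSet.powerset (ZFSet.powerset A) := by
  simp only [ZFSet.pair, ZFSet.mem_powerset, ZFSet.subset_def]
  intro w hw
  simp only [ZFSet.mem_insert_iff, ZFSet.mem_singleton] at hw
  rcases hw with rfl | rfl <;>
    intro u hu <;>
    simp only [ZFSet.mem_insert_iff, ZFSet.mem_singleton] at hu
  · rcases hu with rfl; exact hx
  · rcases hu with rfl | rfl; exacts [hx, hy]

lemma pair_mem_czInner {y G : ZFSet} (hy : y ∈ G) :
    ZFSet.pair y (natEmbed 0) ∈ czInner G := by
  rw [czInner, ZFSet.mem_sep]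
  refine ⟨pair_mem_pp ?_ ?_, y, hy, rfl⟩
  · exact ZFSet.mem_union.2 (Or.inl hy)
  · exact ZFSet.mem_union.2 (Or.inr (ZFSet.mem_singleton.2 rfl))

lemma pair_mem_czFun {x F : ZFSet} (G : ZFSet) (hx : x ∈ F) :
    ZFSet.pair x (czInner G) ∈ czFun F G := by
  rw [czFun, ZFSet.mem_sep]
  refine ⟨pair_mem_pp ?_ ?_, x, hx, rfl⟩
  · exact ZFSet.mem_union.2 (Or.inl hx)
  · exact ZFSet.mem_union.2 (Or.inr (ZFSet.mem_singleton.2 rfl))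

theorem s_total (S : Set (ZFSet × Arity)) (a b : Set (ZFSet × Arity))
    (ha : a.Nonempty) (hb : b.Nonempty) (haG : a ⊆ Gr) (hbG : b ⊆ Gr) :
    (natEmbed 0, Arity.o) ∈ coll (coll (S ∪ Cset) a) b ∧
    (coll (coll (S ∪ Cset) a) b).Nonempty := by
  obtain ⟨⟨x, p⟩, hxa⟩ := ha
  obtain ⟨⟨y, q⟩, hyb⟩ := hb
  obtain ⟨F, hF, hxF⟩ := haG hxa
  obtain ⟨G, hG, hyG⟩ := hbG hyb
  have hmem : (natEmbed 0, Arity.o) ∈ coll (coll (S ∪ Cset) a) b := by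
    refine ⟨(czInner G, .arr q [] .o), ?_, [(y, q)], ?_, ?_⟩
    · refine ⟨(czFun F G, .arr p [] (.arr q [] .o)),
        Or.inr ⟨F, G, hF, hG, p, q, rfl⟩, [(x, p)], ?_, ?_⟩
      · intro z hz; simp at hz; rw [hz]; exact hxa
      · exact ⟨rfl, rfl, czInner G, pair_mem_czFun G hxF, rfl⟩
    · intro z hz; simp at hz; rw [hz]; exact hyb
    · exact ⟨rfl, rfl, natEmbed 0, pair_mem_czInner hyG, rfl⟩
  exact ⟨hmem, ⟨_, hmem⟩⟩
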